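/- Suppose the triple of positive integers (p,q,r) satisfies: p+q+r odd and each less than the sum of the other two. Then for d = (p+q+r−1)/2 there exists a rational map f of degree d with local degree p at 0, q at 1, r at ∞ and no other critical points. -/

import Mathlib

open Polynomial

/-- Local degree at a finite point `z` of the rational map `P/Q` (with `P, Q` coprime),
viewed as a map of the Riemann sphere. -/
noncomputable def ratLocalDeg (P Q : Polynomial ℂ) (z : ℂ) : ℕ :=
  if Q.eval z = 0 then Q.rootMultiplicity z
  else (P * Polynomial.C (Q.eval z) - Q * Polynomial.C (P.eval z)).rootMultiplicity z

/-- Local degree of the rational map `P/Q` at `∞`. -/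
noncomputable def ratLocalDegInf (P Q : Polynomial ℂ) : ℕ :=
  ratLocalDeg (P.reflect (max P.natDegree Q.natDegree))
    (Q.reflect (max P.natDegree Q.natDegree)) 0

private lemma rm_aux (a : ℂ) (k : ℕ) (B : ℂ[X]) (hB : B.eval a ≠ 0) :
    rootMultiplicity a ((X - C a) ^ k * B) = k := by
  have hBne : B ≠ 0 := fun h => hB (by simp [h])
  rw [rootMultiplicity_mul (mul_ne_zero (pow_ne_zero _ (X_sub_C_ne_zero a)) hBne),
    rootMultiplicity_X_sub_C_pow, rootMultiplicity_eq_zero (by simpa [IsRoot] using hB), add_zero]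

private lemma rm_one {f : ℂ[X]} {z : ℂ} (h0 : f.IsRoot z) (h1 : f.derivative.eval z ≠ 0) :
    rootMultiplicity z f = 1 := by
  have hf : f ≠ 0 := fun h => h1 (by simp [h])
  have hge : 1 ≤ rootMultiplicity z f := (rootMultiplicity_pos hf).2 h0
  by_contra hne
  have h2 : 2 ≤ rootMultiplicity z f := by omega
  obtain ⟨g, hg⟩ : (X - C z) ^ 2 ∣ f :=
    (pow_dvd_pow _ h2).trans (pow_rootMultiplicity_dvd f z)
  apply h1
  rw [hg, derivative_mul, derivative_pow]
  simp

private lemma reflect_split (f : ℂ[X]) {M N : ℕ} (h1 : f.natDegree ≤ M) (h2 : M ≤ N) :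
    f.reflect N = f.reflect M * X ^ (N - M) := by
  ext i
  rw [coeff_reflect, coeff_mul_X_pow']
  split_ifs with h
  · rw [coeff_reflect]
    rcases le_or_gt i N with hiN | hiN
    · rw [revAt_le hiN, revAt_le (by omega)]
      congr 1; omega
    · rw [revAt_eq_self_of_lt hiN, revAt_eq_self_of_lt (by omega),
        coeff_eq_zero_of_natDegree_lt (by omega), coeff_eq_zero_of_natDegree_lt (by omega)]
  · rcases le_or_gt i N with hiN | hiN
    · rw [revAt_le hiN, coeff_eq_zero_of_natDegree_lt (by omega)]
    · rw [revAt_eq_self_of_lt hiN, coeff_eq_zero_of_natDegree_lt (by omega)]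

private lemma coprime_of_no_common_root {P Q : ℂ[X]} (hP : P ≠ 0)
    (h : ∀ z : ℂ, P.eval z = 0 → Q.eval z = 0 → False) : IsCoprime P Q := by
  classical
  rw [← EuclideanDomain.gcd_isUnit_iff]
  by_contra hu
  set g := EuclideanDomain.gcd P Q with hg
  have hg0 : g ≠ 0 := fun h0 => hP (EuclideanDomain.gcd_eq_zero_iff.mp h0).1
  by_cases hnd : g.natDegree = 0
  · apply hu
    rw [eq_C_of_natDegree_eq_zero hnd]
    refine isUnit_C.2 (isUnit_iff_ne_zero.2 fun hc => hg0 ?_)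
    rw [eq_C_of_natDegree_eq_zero hnd, hc, map_zero]
  · have hdeg : 0 < g.degree := natDegree_pos_iff_degree_pos.1 (Nat.pos_of_ne_zero hnd)
    obtain ⟨z, hz⟩ := Complex.exists_root hdeg
    exact h z (eval_eq_zero_of_dvd_of_eval_eq_zero (EuclideanDomain.gcd_dvd_left P Q) hz)
      (eval_eq_zero_of_dvd_of_eval_eq_zero (EuclideanDomain.gcd_dvd_right P Q) hz)

set_option maxHeartbeats 1000000 in
/-- If `(p, q, r)` are positive integers with `p + q + r` odd and each less than the
sum of the other two, then for `d = (p + q + r - 1)/2` there is a rational map of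
degree `d` with local degree `p` at `0`, `q` at `1`, `r` at `∞`, and no other
critical points. -/
theorem rational_three_critical_points_existence
    (p q r d : ℕ) (hp : 0 < p) (hq : 0 < q) (hr : 0 < r)
    (hodd : Odd (p + q + r))
    (htri1 : p < q + r) (htri2 : q < p + r) (htri3 : r < p + q)
    (hd : p + q + r = 2 * d + 1) :
    ∃ P Q : Polynomial ℂ, IsCoprime P Q ∧ max P.natDegree Q.natDegree = d ∧
      ratLocalDeg P Q 0 = p ∧ ratLocalDeg P Q 1 = q ∧ ratLocalDegInf P Q = r ∧
      ∀ z : ℂ, z ≠ 0 → z ≠ 1 → ratLocalDeg P Q z = 1 := by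
  classical
  have hdp : p ≤ d := by omega
  have hdr : r ≤ d := by omega
  set m := d - p with hm
  set n := d - r with hn
  have hmn : m + n + 1 = q := by omega
  have hnq : n + 1 ≤ q := by omega
  have hmq : m + 1 ≤ q := by omega
  have hpn : n < p := by omega
  set B : ℂ[X] := (X - C 1) ^ q with hB
  have hBmonic : B.Monic := (monic_X_sub_C (1:ℂ)).pow q
  have hBne : B ≠ 0 := hBmonic.ne_zero
  have hBdeg : B.degree = (q : ℕ) := by
    rw [hB, degree_pow, degree_X_sub_C]; simp
  -- existence of a nonzero solution of the linear conditions
  haveI i1 : Module.Finite ℂ (degreeLT ℂ (m+1)) := Module.Finite.equiv (degreeLTEquiv ℂ (m+1)).symm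
  haveI i2 : Module.Finite ℂ (degreeLT ℂ (n+1)) := Module.Finite.equiv (degreeLTEquiv ℂ (n+1)).symm
  haveI i3 : Module.Finite ℂ (degreeLT ℂ q) := Module.Finite.equiv (degreeLTEquiv ℂ q).symm
  have hfr : ∀ k : ℕ, Module.finrank ℂ (degreeLT ℂ k) = k := fun k =>
    (degreeLTEquiv ℂ k).finrank_eq.trans (Module.finrank_fin_fun ℂ)
  set S : (degreeLT ℂ (m+1) × degreeLT ℂ (n+1)) →ₗ[ℂ] ℂ[X] :=
    (LinearMap.mulLeft ℂ ((X : ℂ[X])^p)).comp ((degreeLT ℂ (m+1)).subtype.comp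
        (LinearMap.fst ℂ _ _))
      - (degreeLT ℂ (n+1)).subtype.comp (LinearMap.snd ℂ _ _) with hS
  set T : (degreeLT ℂ (m+1) × degreeLT ℂ (n+1)) →ₗ[ℂ] degreeLT ℂ q :=
    ((modByMonicHom B).comp S).codRestrict (degreeLT ℂ q)
      (fun x => mem_degreeLT.2 (hBdeg ▸ degree_modByMonic_lt _ hBmonic)) with hT
  have hninj : ¬ Function.Injective T := by
    intro hinj
    have h1 := LinearMap.finrank_le_finrank_of_injective hinj
    rw [Module.finrank_prod, hfr, hfr, hfr] at h1
    omega
  obtain ⟨x, y, hxy, hne⟩ := Function.not_injective_iff.1 hninj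
  set v := x - y with hv
  have hv0 : v ≠ 0 := sub_ne_zero.2 hne
  have hTv : T v = 0 := by rw [hv, map_sub, hxy, sub_self]
  set A : ℂ[X] := (v.1 : ℂ[X]) with hA
  set Qq : ℂ[X] := (v.2 : ℂ[X]) with hQq
  have hdvd : B ∣ (X : ℂ[X])^p * A - Qq := by
    have h0 : ((X : ℂ[X])^p * A - Qq) %ₘ B = 0 := congrArg Subtype.val hTv
    rwa [modByMonic_eq_zero_iff_dvd hBmonic] at h0
  have hAdeg : A.degree < ((m+1 : ℕ) : WithBot ℕ) := mem_degreeLT.1 v.1.2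
  have hQdeg : Qq.degree < ((n+1 : ℕ) : WithBot ℕ) := mem_degreeLT.1 v.2.2
  have hnatA : A.natDegree ≤ m := by
    rcases eq_or_ne A 0 with h | h
    · simp [h]
    · have := (natDegree_lt_iff_degree_lt h).2 hAdeg; omega
  have hnatQ : Qq.natDegree ≤ n := by
    rcases eq_or_ne Qq 0 with h | h
    · simp [h]
    · have := (natDegree_lt_iff_degree_lt h).2 hQdeg; omega
  have hXC : IsCoprime ((X : ℂ[X]) - C 1) X := ⟨-1, 1, by simp⟩
  have hcopBX : IsCoprime B ((X : ℂ[X])^p) := hXC.pow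
  have hA0Q0 : A ≠ 0 ∧ Qq ≠ 0 := by
    have h1 : A = 0 → Qq = 0 := by
      intro h
      have : B ∣ Qq := dvd_neg.mp (by simpa [h] using hdvd)
      exact eq_zero_of_dvd_of_degree_lt this
        (hBdeg ▸ lt_of_lt_of_le hQdeg (Nat.cast_le.2 hnq))
    have h2 : Qq = 0 → A = 0 := by
      intro h
      have hd2 : B ∣ (X : ℂ[X])^p * A := by simpa [h] using hdvd
      have : B ∣ A := hcopBX.dvd_of_dvd_mul_left hd2
      exact eq_zero_of_dvd_of_degree_lt this
        (hBdeg ▸ lt_of_lt_of_le hAdeg (Nat.cast_le.2 hmq))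
    by_cases hA' : A = 0
    · exfalso
      apply hv0
      have hq' := h1 hA'
      have e1 : v.1 = 0 := Subtype.ext (by simpa [hA] using hA')
      have e2 : v.2 = 0 := Subtype.ext (by simpa [hQq] using hq')
      exact Prod.ext e1 e2
    · exact ⟨hA', fun hQ' => hA' (h2 hQ')⟩
  obtain ⟨hAne, hQne⟩ := hA0Q0
  set Pp : ℂ[X] := (X : ℂ[X])^p * A with hPp
  have hPne : Pp ≠ 0 := mul_ne_zero (pow_ne_zero _ X_ne_zero) hAne
  have hnatP : Pp.natDegree = p + A.natDegree := by
    rw [hPp, natDegree_mul (pow_ne_zero _ X_ne_zero) hAne, natDegree_X_pow]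
  obtain ⟨D, hD⟩ : ∃ D, Pp - Qq = B * D := hdvd
  have hDne : D ≠ 0 := by
    intro h
    rw [h, mul_zero, sub_eq_zero] at hD
    have : Qq.natDegree = p + A.natDegree := by rw [← hD, hnatP]
    omega
  set W : ℂ[X] := derivative Pp * Qq - Pp * derivative Qq with hW
  have hWne : W ≠ 0 := by
    intro hW0
    set g : ℂ[X] := GCDMonoid.gcd Pp Qq with hg
    have hgne : g ≠ 0 := gcd_ne_zero_of_left hPne
    set P1 : ℂ[X] := Pp / g with hP1d
    set Q1 : ℂ[X] := Qq / g with hQ1d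
    have hP1 : Pp = g * P1 := (EuclideanDomain.mul_div_cancel' hgne (gcd_dvd_left _ _)).symm
    have hQ1 : Qq = g * Q1 := (EuclideanDomain.mul_div_cancel' hgne (gcd_dvd_right _ _)).symm
    have hcop1 : IsCoprime P1 Q1 := isCoprime_div_gcd_div_gcd hQne
    have hP1ne : P1 ≠ 0 := left_div_gcd_ne_zero hPne
    have hQ1ne : Q1 ≠ 0 := right_div_gcd_ne_zero hQne
    have hWfac : W = g^2 * (derivative P1 * Q1 - P1 * derivative Q1) := by
      rw [hW, hP1, hQ1, derivative_mul, derivative_mul]; ring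
    have hinner : derivative P1 * Q1 - P1 * derivative Q1 = 0 := by
      have h0 : g^2 * (derivative P1 * Q1 - P1 * derivative Q1) = 0 := by rw [← hWfac, hW0]
      exact (mul_eq_zero.1 h0).resolve_left (pow_ne_zero _ hgne)
    have h2 : derivative P1 * Q1 = P1 * derivative Q1 := sub_eq_zero.1 hinner
    have hdQ1 : Q1 ∣ derivative Q1 :=
      hcop1.symm.dvd_of_dvd_mul_left (h2 ▸ dvd_mul_left Q1 (derivative P1))
    have hdP1 : P1 ∣ derivative P1 :=
      hcop1.dvd_of_dvd_mul_right (h2 ▸ dvd_mul_right P1 (derivative Q1))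
    have hQ1deg : Q1.natDegree = 0 := by
      rcases eq_or_ne (derivative Q1) 0 with h | h
      · exact natDegree_eq_zero_of_derivative_eq_zero h
      · exact absurd (eq_zero_of_dvd_of_degree_lt hdQ1 (degree_derivative_lt hQ1ne)) h
    have hP1deg : P1.natDegree = 0 := by
      rcases eq_or_ne (derivative P1) 0 with h | h
      · exact natDegree_eq_zero_of_derivative_eq_zero h
      · exact absurd (eq_zero_of_dvd_of_degree_lt hdP1 (degree_derivative_lt hP1ne)) h
    set a := P1.coeff 0 with ha
    set b := Q1.coeff 0 with hb
    have haC : P1 = C a := eq_C_of_natDegree_eq_zero hP1deg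
    have hbC : Q1 = C b := eq_C_of_natDegree_eq_zero hQ1deg
    have hane : a ≠ 0 := fun h => hP1ne (by rw [haC, h, map_zero])
    have hbne : b ≠ 0 := fun h => hQ1ne (by rw [hbC, h, map_zero])
    have key : Pp * C b = Qq * C a := by rw [hP1, hQ1, haC, hbC]; ring
    by_cases hab : a = b
    · have hPQ : Pp = Qq := by
        rw [hab] at key
        exact mul_right_cancel₀ (fun h => hbne (C_eq_zero.1 h)) key
      have : Qq.natDegree = p + A.natDegree := by rw [← hPQ, hnatP]
      omega
    · have hdvd2 : B ∣ Qq * C (a - b) := by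
        refine ⟨D * C b, ?_⟩
        rw [map_sub, mul_sub, ← key, ← sub_mul, hD]; ring
      have : Qq * C (a - b) = 0 := by
        refine eq_zero_of_dvd_of_degree_lt hdvd2 ?_
        rw [hBdeg, degree_mul_C (sub_ne_zero.2 hab)]
        exact lt_of_lt_of_le hQdeg (Nat.cast_le.2 hnq)
      rcases mul_eq_zero.1 this with h | h
      · exact hQne h
      · exact sub_ne_zero.2 hab (C_eq_zero.1 h)
  set M0 : ℂ[X] := (C (p:ℂ) * A + X * derivative A) * Qq - X * A * derivative Qq with hM0d
  have hWfac1 : W = X^(p-1) * M0 := by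
    have hXp : (X:ℂ[X])^p = X^(p-1) * X := by rw [← pow_succ]; congr 1; omega
    rw [hW, hPp, derivative_mul, derivative_X_pow, hM0d, hXp]
    ring
  set M1 : ℂ[X] := C (q:ℂ) * Pp * D + (X - C 1) * (Pp * derivative D - derivative Pp * D)
    with hM1d
  have hQeq : Qq = Pp - B * D := by rw [← hD]; ring
  have hq' : ((X:ℂ[X]) - C 1)^q = (X - C 1)^(q-1) * (X - C 1) := by
    rw [← pow_succ]; congr 1; omega
  have hdB : derivative B = C (q:ℂ) * (X - C 1)^(q-1) := by
    rw [hB, derivative_pow, derivative_X_sub_C, mul_one]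
  have hdQder : derivative Qq = derivative Pp - (derivative B * D + B * derivative D) := by
    conv_lhs => rw [hQeq]
    rw [derivative_sub]
    congr 1
    exact derivative_mul
  have hWfac2 : W = (X - C 1)^(q-1) * M1 := by
    rw [hW, hdQder, hdB, hQeq, hB, hq', hM1d]
    ring
  have hnatPle : Pp.natDegree ≤ d := by rw [hnatP]; omega
  have hPge : p ≤ Pp.natDegree := by rw [hnatP]; omega
  have hbound : natDegree W ≤ Pp.natDegree + Qq.natDegree - 1 := by
    have h1 : natDegree (derivative Pp * Qq) ≤ Pp.natDegree - 1 + Qq.natDegree :=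
      le_trans natDegree_mul_le (Nat.add_le_add_right (natDegree_derivative_le _) _)
    rcases eq_or_ne (derivative Qq) 0 with h | h
    · have hWQ : W = derivative Pp * Qq := by rw [hW, h, mul_zero, sub_zero]
      rw [hWQ]; omega
    · have hQ1 : Qq.natDegree ≠ 0 := fun h0 => h (by rw [eq_C_of_natDegree_eq_zero h0]; simp)
      have h2 : natDegree (Pp * derivative Qq) ≤ Pp.natDegree + (Qq.natDegree - 1) :=
        le_trans natDegree_mul_le (Nat.add_le_add_left (natDegree_derivative_le _) _)
      have h3 := natDegree_sub_le (derivative Pp * Qq) (Pp * derivative Qq)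
      rw [hW]
      omega
  have hdvdW : X^(p-1) * (X - C 1)^(q-1) ∣ W :=
    (hXC.symm.pow).mul_dvd ⟨M0, hWfac1⟩ ⟨M1, hWfac2⟩
  obtain ⟨E, hE⟩ := hdvdW
  have hEne : E ≠ 0 := by rintro rfl; rw [mul_zero] at hE; exact hWne hE
  have hXfne : (X:ℂ[X])^(p-1) * (X - C 1)^(q-1) ≠ 0 :=
    mul_ne_zero (pow_ne_zero _ X_ne_zero) (pow_ne_zero _ (X_sub_C_ne_zero 1))
  have hWdeg' : natDegree W = (p-1) + (q-1) + natDegree E := by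
    rw [hE, natDegree_mul hXfne hEne,
      natDegree_mul (pow_ne_zero _ X_ne_zero) (pow_ne_zero _ (X_sub_C_ne_zero 1)),
      natDegree_pow, natDegree_pow, natDegree_X, natDegree_X_sub_C]
    ring
  have hEdeg : natDegree E = 0 := by omega
  set c := E.coeff 0 with hc
  have hcC : E = C c := eq_C_of_natDegree_eq_zero hEdeg
  have hcne : c ≠ 0 := fun h => hEne (by rw [hcC, h, map_zero])
  have hWc : W = X^(p-1) * (X - C 1)^(q-1) * C c := by rw [hE, hcC]
  obtain ⟨hnP, hnQ⟩ : Pp.natDegree = d ∧ Qq.natDegree = d - r := by omega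
  have h0cancel : M0 = (X - C 1)^(q-1) * C c :=
    mul_left_cancel₀ (pow_ne_zero (p-1) (X_ne_zero (R := ℂ)))
      (by rw [← hWfac1, hWc]; ring)
  have hM0eval : (p:ℂ) * A.eval 0 * Qq.eval 0 = (-1)^(q-1) * c := by
    have hL : M0.eval 0 = (p:ℂ) * A.eval 0 * Qq.eval 0 := by rw [hM0d]; simp
    have hR : (((X:ℂ[X]) - C 1)^(q-1) * C c).eval 0 = (-1)^(q-1) * c := by simp
    rw [← hL, ← hR, h0cancel]
  have hA0 : A.eval 0 ≠ 0 := by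
    intro h; rw [h, mul_zero, zero_mul] at hM0eval
    exact (mul_ne_zero (pow_ne_zero _ (neg_ne_zero.2 (one_ne_zero))) hcne) hM0eval.symm
  have hQ0 : Qq.eval 0 ≠ 0 := by
    intro h; rw [h, mul_zero] at hM0eval
    exact (mul_ne_zero (pow_ne_zero _ (neg_ne_zero.2 (one_ne_zero))) hcne) hM0eval.symm
  have h1cancel : M1 = X^(p-1) * C c :=
    mul_left_cancel₀ (pow_ne_zero (q-1) (X_sub_C_ne_zero (1:ℂ)))
      (by rw [← hWfac2, hWc]; ring)
  have hM1eval : (q:ℂ) * Pp.eval 1 * D.eval 1 = c := by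
    have hL : M1.eval 1 = (q:ℂ) * Pp.eval 1 * D.eval 1 := by rw [hM1d]; simp
    have hR : (((X:ℂ[X]))^(p-1) * C c).eval 1 = c := by simp
    rw [← hL, ← hR, h1cancel]
  have hPe1 : Pp.eval 1 ≠ 0 := fun h => hcne (by rw [← hM1eval, h, mul_zero, zero_mul])
  have hDe1 : D.eval 1 ≠ 0 := fun h => hcne (by rw [← hM1eval, h, mul_zero])
  have hQP1 : Qq.eval 1 = Pp.eval 1 := by
    have h1 := congrArg (eval 1) hD
    rw [hB] at h1
    simp [zero_pow hq.ne', sub_eq_zero] at h1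
    exact h1.symm
  have hQe1 : Qq.eval 1 ≠ 0 := by rw [hQP1]; exact hPe1
  have hWeval : ∀ z : ℂ, z ≠ 0 → z ≠ 1 → W.eval z ≠ 0 := by
    intro z hz0 hz1
    have he : W.eval z = z^(p-1) * (z-1)^(q-1) * c := by rw [hWc]; simp
    rw [he]
    exact mul_ne_zero (mul_ne_zero (pow_ne_zero _ hz0)
      (pow_ne_zero _ (sub_ne_zero.2 hz1))) hcne
  clear_value v A Qq Pp W M0 M1 B
  refine ⟨Pp, Qq, ?_, ?_, ?_, ?_, ?_, ?_⟩
  · refine coprime_of_no_common_root hPne fun z h1 h2 => ?_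
    have hz0 : z ≠ 0 := fun h => hQ0 (h ▸ h2)
    have hz1 : z ≠ 1 := fun h => hQe1 (h ▸ h2)
    exact hWeval z hz0 hz1 (by rw [hW]; simp [h1, h2])
  · rw [hnP, hnQ]; omega
  · unfold ratLocalDeg
    rw [if_neg hQ0]
    have hP0 : Pp.eval 0 = 0 := by rw [hPp]; simp [zero_pow hp.ne']
    have key : Pp * C (Qq.eval 0) - Qq * C (Pp.eval 0) = (X - C 0)^p * (A * C (Qq.eval 0)) := by
      rw [hP0, map_zero, mul_zero, sub_zero, hPp, sub_zero, mul_assoc]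
    rw [key]
    exact rm_aux 0 p _ (by rw [eval_mul, eval_C]; exact mul_ne_zero hA0 hQ0)
  · unfold ratLocalDeg
    rw [if_neg hQe1]
    have key : Pp * C (Qq.eval 1) - Qq * C (Pp.eval 1) = (X - C 1)^q * (D * C (Qq.eval 1)) := by
      rw [← hQP1, ← sub_mul, hD, hB, mul_assoc]
    rw [key]
    exact rm_aux 1 q _ (by rw [eval_mul, eval_C]; exact mul_ne_zero hDe1 hQe1)
  · unfold ratLocalDegInf
    have hmax : max Pp.natDegree Qq.natDegree = d := by rw [hnP, hnQ]; omega
    rw [hmax]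
    unfold ratLocalDeg
    have hcond : (Qq.reflect d).eval 0 = 0 := by
      rw [← coeff_zero_eq_eval_zero, coeff_reflect, revAt_le (Nat.zero_le d), Nat.sub_zero]
      exact coeff_eq_zero_of_natDegree_lt (by omega)
    rw [if_pos hcond]
    rw [reflect_split Qq (le_of_eq hnQ) (by omega : d - r ≤ d)]
    rw [show d - (d - r) = r from by omega]
    rw [show Qq.reflect (d - r) * X^r = (X - C 0)^r * Qq.reflect (d-r) from by
      rw [C_0, sub_zero, mul_comm]]
    refine rm_aux 0 r _ ?_
    rw [← coeff_zero_eq_eval_zero, coeff_reflect, revAt_le (Nat.zero_le _), Nat.sub_zero, ← hnQ]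
    exact leadingCoeff_ne_zero.2 hQne
  · intro z hz0 hz1
    by_cases hz : Qq.eval z = 0
    · unfold ratLocalDeg
      rw [if_pos hz]
      refine rm_one hz ?_
      intro h
      exact hWeval z hz0 hz1 (by rw [hW]; simp [hz, h])
    · unfold ratLocalDeg
      rw [if_neg hz]
      refine rm_one ?_ ?_
      · show eval z _ = 0
        simp only [eval_sub, eval_mul, eval_C]
        ring
      · have hder : derivative (Pp * C (Qq.eval z) - Qq * C (Pp.eval z))
            = derivative Pp * C (Qq.eval z) - derivative Qq * C (Pp.eval z) := by
          rw [derivative_sub, derivative_mul, derivative_mul, derivative_C, derivative_C]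
          ring
        rw [hder]
        have he : eval z (derivative Pp * C (Qq.eval z) - derivative Qq * C (Pp.eval z))
            = W.eval z := by
          rw [hW]; simp only [eval_sub, eval_mul, eval_C]; ring
        rw [he]
        exact hWeval z hz0 hz1
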